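/- For every function f that is 5 times continuously differentiable on a neighborhood of x_{j+1/2} = x_j + Δx/2 (with all stencil points in that neighborhood), L_{1,1}f = (1/24)(f(x_j-2Δx) - 3f(x_j-Δx) - 21f(x_j) + 23f(x_j+Δx)) satisfies |L_{1,1}f - Δx·f'(x_{j+1/2}) - (1/24)Δx⁴·f⁗(x_{j+1/2})| ≤ C·Δx⁵ for some constant C and all sufficiently small Δx > 0. -/
import Mathlib

open Set

lemma idw_nhds {f : ℝ → ℝ} {K : Set ℝ} {y : ℝ} (h : K ∈ nhds y) (m : ℕ) :
    iteratedDerivWithin m f K y = iteratedDeriv m f y := by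
  rw [iteratedDerivWithin_eq_iteratedFDerivWithin, iteratedDeriv_eq_iteratedFDeriv,
    ← iteratedFDerivWithin_univ, ← Set.univ_inter K, iteratedFDerivWithin_inter h]

lemma idw_transfer {f : ℝ → ℝ} {K : Set ℝ} (hKu : UniqueDiffOn ℝ K)
    (hf : ContDiffOn ℝ 5 f K) {a b : ℝ} (hab : a < b) (hsub : Set.Icc a b ⊆ K)
    {m : ℕ} (hm : m ≤ 5) {y : ℝ} (hy : y ∈ Set.Icc a b) :
    iteratedDerivWithin m f (Set.Icc a b) y = iteratedDerivWithin m f K y := by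
  have h := ((hf.ftaylorSeriesWithin hKu).mono hsub).eq_iteratedFDerivWithin_of_uniqueDiffOn
    (m := m) (by exact_mod_cast hm) (uniqueDiffOn_Icc hab) hy
  rw [iteratedDerivWithin_eq_iteratedFDerivWithin, iteratedDerivWithin_eq_iteratedFDerivWithin,
    ← h]
  rfl

lemma iteratedDeriv_comp_const_sub' (n : ℕ) (f : ℝ → ℝ) (a : ℝ) (x : ℝ) :
    iteratedDeriv n (fun y => f (a - y)) x = (-1 : ℝ)^n * iteratedDeriv n f (a - x) := by
  have h1 : (fun y : ℝ => f (a - y)) = (fun y : ℝ => (fun z : ℝ => f (a + z)) (-y)) := by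
    funext y; simp [sub_eq_add_neg]
  rw [h1, iteratedDeriv_comp_neg n (fun z : ℝ => f (a + z)) x,
    iteratedDeriv_comp_const_add n f a]
  simp [sub_eq_add_neg, smul_eq_mul]

set_option maxHeartbeats 1000000 in
theorem weno7_L11_expansion
    (f : ℝ → ℝ) (xj : ℝ)
    (hf : ∃ s : Set ℝ, IsOpen s ∧ xj ∈ s ∧ ContDiffOn ℝ 5 f s) :
    ∃ C δ : ℝ, 0 < C ∧ 0 < δ ∧ ∀ Δx : ℝ, 0 < Δx → Δx < δ →
      |(1/24) * (f (xj - 2*Δx) - 3 * f (xj - Δx) - 21 * f xj + 23 * f (xj + Δx))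
        - Δx * deriv f (xj + Δx/2)
        - (1/24) * Δx^4 * iteratedDeriv 4 f (xj + Δx/2)| ≤ C * Δx^5 := by
  obtain ⟨s, hs, hxs, hf5⟩ := hf
  obtain ⟨r, hr0, hrs⟩ : ∃ r > 0, Metric.closedBall xj r ⊆ s :=
    Metric.nhds_basis_closedBall.mem_iff.mp (hs.mem_nhds hxs)
  have hKs : Set.Icc (xj - r) (xj + r) ⊆ s := by rw [← Real.closedBall_eq_Icc]; exact hrs
  have hKlt : xj - r < xj + r := by linarith
  have hKu : UniqueDiffOn ℝ (Set.Icc (xj - r) (xj + r)) := uniqueDiffOn_Icc hKlt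
  have hfK : ContDiffOn ℝ 5 f (Set.Icc (xj - r) (xj + r)) := hf5.mono hKs
  obtain ⟨M, hM⟩ := isCompact_Icc.exists_bound_of_continuousOn
    (hfK.continuousOn_iteratedDerivWithin le_rfl hKu)
  set M0 : ℝ := max M 1 with hM0def
  have hM0 : (0:ℝ) < M0 := lt_of_lt_of_le one_pos (le_max_right M 1)
  have hMM0 : M ≤ M0 := le_max_left M 1
  refine ⟨M0 * 3125 / 384, r/3, by positivity, by positivity, ?_⟩
  intro Δx hΔ hΔr
  obtain ⟨c, hc⟩ : ∃ c : ℝ, c = xj + Δx/2 := ⟨_, rfl⟩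
  rw [show xj + Δx/2 = c from hc.symm]
  have hcb : c < c + 5*Δx/2 := by linarith
  have hsub1 : Set.Icc c (c + 5*Δx/2) ⊆ Set.Icc (xj - r) (xj + r) := by
    intro y hy; obtain ⟨h1, h2⟩ := hy
    constructor <;> linarith [hc]
  set g : ℝ → ℝ := fun y => f (2*c - y) with hg
  have hKglt : c - r/3 < c + 3*Δx := by linarith
  have hKgu : UniqueDiffOn ℝ (Set.Icc (c - r/3) (c + 3*Δx)) := uniqueDiffOn_Icc hKglt
  have hgK : ContDiffOn ℝ 5 g (Set.Icc (c - r/3) (c + 3*Δx)) := by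
    apply hfK.comp ((contDiff_const.sub contDiff_id).contDiffOn)
    intro y hy
    obtain ⟨h1, h2⟩ := hy
    simp only [Set.mem_preimage, id_eq, Set.mem_Icc]
    constructor <;> linarith [hc]
  have hsubg : Set.Icc c (c + 5*Δx/2) ⊆ Set.Icc (c - r/3) (c + 3*Δx) := by
    intro y hy; obtain ⟨h1, h2⟩ := hy
    constructor <;> linarith
  -- coefficients
  have hcmem : c ∈ Set.Icc c (c + 5*Δx/2) := left_mem_Icc.mpr hcb.le
  have hKnc : Set.Icc (xj - r) (xj + r) ∈ nhds c := by
    apply Icc_mem_nhds <;> linarith [hc]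
  have hKgnc : Set.Icc (c - r/3) (c + 3*Δx) ∈ nhds c := by
    apply Icc_mem_nhds <;> linarith
  have hcoefF : ∀ k : ℕ, k ≤ 5 →
      iteratedDerivWithin k f (Set.Icc c (c + 5*Δx/2)) c = iteratedDeriv k f c := by
    intro k hk
    rw [idw_transfer hKu hfK hcb hsub1 hk hcmem, idw_nhds hKnc]
  have hcoefG : ∀ k : ℕ, k ≤ 5 →
      iteratedDerivWithin k g (Set.Icc c (c + 5*Δx/2)) c = (-1:ℝ)^k * iteratedDeriv k f c := by
    intro k hk
    rw [idw_transfer hKgu hgK hcb hsubg hk hcmem, idw_nhds hKgnc, hg,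
      iteratedDeriv_comp_const_sub' k f (2*c) c, show 2*c - c = c by ring]
  -- derivative bounds
  have hCf : ∀ y ∈ Set.Icc c (c + 5*Δx/2),
      ‖iteratedDerivWithin 5 f (Set.Icc c (c + 5*Δx/2)) y‖ ≤ M0 := by
    intro y hy
    rw [idw_transfer hKu hfK hcb hsub1 le_rfl hy]
    exact (hM y (hsub1 hy)).trans hMM0
  have hCg : ∀ y ∈ Set.Icc c (c + 5*Δx/2),
      ‖iteratedDerivWithin 5 g (Set.Icc c (c + 5*Δx/2)) y‖ ≤ M0 := by
    intro y hy
    obtain ⟨hy1, hy2⟩ := hy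
    have hmemg : Set.Icc (c - r/3) (c + 3*Δx) ∈ nhds y := by
      apply Icc_mem_nhds <;> linarith
    have hmemK : Set.Icc (xj - r) (xj + r) ∈ nhds (2*c - y) := by
      apply Icc_mem_nhds <;> linarith [hc]
    have hmemK' : 2*c - y ∈ Set.Icc (xj - r) (xj + r) := by
      constructor <;> linarith [hc]
    rw [idw_transfer hKgu hgK hcb hsubg le_rfl ⟨hy1, hy2⟩, idw_nhds hmemg, hg,
      iteratedDeriv_comp_const_sub' 5 f (2*c) y, ← idw_nhds hmemK, norm_mul]
    calc ‖(-1:ℝ)^5‖ * ‖iteratedDerivWithin 5 f (Set.Icc (xj - r) (xj + r)) (2*c - y)‖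
        = ‖iteratedDerivWithin 5 f (Set.Icc (xj - r) (xj + r)) (2*c - y)‖ := by norm_num
      _ ≤ M0 := (hM _ hmemK').trans hMM0
  -- Taylor polynomial values
  have hPf : ∀ y : ℝ, taylorWithinEval f 4 (Set.Icc c (c + 5*Δx/2)) c y =
      f c + (y - c) * iteratedDeriv 1 f c + (y-c)^2/2 * iteratedDeriv 2 f c
        + (y-c)^3/6 * iteratedDeriv 3 f c + (y-c)^4/24 * iteratedDeriv 4 f c := by
    intro y
    rw [taylor_within_apply]
    rw [Finset.sum_range_succ, Finset.sum_range_succ, Finset.sum_range_succ,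
      Finset.sum_range_succ, Finset.sum_range_succ, Finset.sum_range_zero,
      hcoefF 0 (by norm_num), hcoefF 1 (by norm_num), hcoefF 2 (by norm_num),
      hcoefF 3 (by norm_num), hcoefF 4 (by norm_num)]
    simp only [smul_eq_mul, iteratedDeriv_zero]
    norm_num [Nat.factorial]
    ring
  have hPg : ∀ y : ℝ, taylorWithinEval g 4 (Set.Icc c (c + 5*Δx/2)) c y =
      f c - (y - c) * iteratedDeriv 1 f c + (y-c)^2/2 * iteratedDeriv 2 f c
        - (y-c)^3/6 * iteratedDeriv 3 f c + (y-c)^4/24 * iteratedDeriv 4 f c := by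
    intro y
    rw [taylor_within_apply]
    rw [Finset.sum_range_succ, Finset.sum_range_succ, Finset.sum_range_succ,
      Finset.sum_range_succ, Finset.sum_range_succ, Finset.sum_range_zero,
      hcoefG 0 (by norm_num), hcoefG 1 (by norm_num), hcoefG 2 (by norm_num),
      hcoefG 3 (by norm_num), hcoefG 4 (by norm_num)]
    simp only [smul_eq_mul, iteratedDeriv_zero]
    norm_num [Nat.factorial]
    ring
  -- Taylor remainder bounds
  have hffour : ContDiffOn ℝ ((4:ℕ) + 1) f (Set.Icc c (c + 5*Δx/2)) := by
    have h45 : (((4:ℕ) : WithTop ℕ∞) + 1) = 5 := by norm_cast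
    rw [h45]; exact hfK.mono hsub1
  have hgfour : ContDiffOn ℝ ((4:ℕ) + 1) g (Set.Icc c (c + 5*Δx/2)) := by
    have h45 : (((4:ℕ) : WithTop ℕ∞) + 1) = 5 := by norm_cast
    rw [h45]; exact hgK.mono hsubg
  have hfact : ((4:ℕ).factorial : ℝ) = 24 := by norm_num [Nat.factorial]
  have hT1 := taylor_mean_remainder_bound (n := 4) hcb.le hffour
    (⟨by linarith, by linarith⟩ : c + Δx/2 ∈ Set.Icc c (c + 5*Δx/2)) hCf
  have hTg1 := taylor_mean_remainder_bound (n := 4) hcb.le hgfour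
    (⟨by linarith, by linarith⟩ : c + Δx/2 ∈ Set.Icc c (c + 5*Δx/2)) hCg
  have hTg2 := taylor_mean_remainder_bound (n := 4) hcb.le hgfour
    (⟨by linarith, by linarith⟩ : c + 3*Δx/2 ∈ Set.Icc c (c + 5*Δx/2)) hCg
  have hTg3 := taylor_mean_remainder_bound (n := 4) hcb.le hgfour
    (⟨by linarith, by linarith⟩ : c + 5*Δx/2 ∈ Set.Icc c (c + 5*Δx/2)) hCg
  rw [hfact, Real.norm_eq_abs, show c + Δx/2 - c = Δx/2 by ring] at hT1 hTg1
  rw [hfact, Real.norm_eq_abs, show c + 3*Δx/2 - c = 3*Δx/2 by ring] at hTg2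
  rw [hfact, Real.norm_eq_abs, show c + 5*Δx/2 - c = 5*Δx/2 by ring] at hTg3
  have hp5 : (0:ℝ) < Δx^5 := pow_pos hΔ 5
  have hE1 : |f (c + Δx/2) - taylorWithinEval f 4 (Set.Icc c (c + 5*Δx/2)) c (c + Δx/2)|
      ≤ M0 * 3125 / 32 * Δx^5 / 24 := by
    refine hT1.trans ?_; nlinarith [hM0.le, hp5]
  have hEg1 : |g (c + Δx/2) - taylorWithinEval g 4 (Set.Icc c (c + 5*Δx/2)) c (c + Δx/2)|
      ≤ M0 * 3125 / 32 * Δx^5 / 24 := by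
    refine hTg1.trans ?_; nlinarith [hM0.le, hp5]
  have hEg2 : |g (c + 3*Δx/2) - taylorWithinEval g 4 (Set.Icc c (c + 5*Δx/2)) c (c + 3*Δx/2)|
      ≤ M0 * 3125 / 32 * Δx^5 / 24 := by
    refine hTg2.trans ?_; nlinarith [hM0.le, hp5]
  have hEg3 : |g (c + 5*Δx/2) - taylorWithinEval g 4 (Set.Icc c (c + 5*Δx/2)) c (c + 5*Δx/2)|
      ≤ M0 * 3125 / 32 * Δx^5 / 24 := by
    refine hTg3.trans ?_; nlinarith [hM0.le, hp5]
  -- rewrite function values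
  have hv1 : f (xj + Δx) = f (c + Δx/2) := by congr 1; rw [hc]; ring
  have hv2 : f xj = g (c + Δx/2) := by simp only [hg]; congr 1; rw [hc]; ring
  have hv3 : f (xj - Δx) = g (c + 3*Δx/2) := by simp only [hg]; congr 1; rw [hc]; ring
  have hv4 : f (xj - 2*Δx) = g (c + 5*Δx/2) := by simp only [hg]; congr 1; rw [hc]; ring
  have hderiv : deriv f c = iteratedDeriv 1 f c := by rw [iteratedDeriv_one]
  -- key algebraic identity
  have key : (1/24) * (f (xj - 2*Δx) - 3 * f (xj - Δx) - 21 * f xj + 23 * f (xj + Δx))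
        - Δx * deriv f c - (1/24) * Δx^4 * iteratedDeriv 4 f c
      = (1/24) * ((g (c + 5*Δx/2) - taylorWithinEval g 4 (Set.Icc c (c + 5*Δx/2)) c (c + 5*Δx/2))
          - 3 * (g (c + 3*Δx/2) - taylorWithinEval g 4 (Set.Icc c (c + 5*Δx/2)) c (c + 3*Δx/2))
          - 21 * (g (c + Δx/2) - taylorWithinEval g 4 (Set.Icc c (c + 5*Δx/2)) c (c + Δx/2))
          + 23 * (f (c + Δx/2) - taylorWithinEval f 4 (Set.Icc c (c + 5*Δx/2)) c (c + Δx/2))) := by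
    rw [hv1, hv2, hv3, hv4, hderiv, hPf, hPg, hPg, hPg]
    ring
  rw [key]
  rw [abs_le] at hE1 hEg1 hEg2 hEg3
  rw [abs_le]
  constructor
  · linarith [hE1.1, hEg1.1, hEg2.1, hEg3.1, hE1.2, hEg1.2, hEg2.2, hEg3.2]
  · linarith [hE1.1, hEg1.1, hEg2.1, hEg3.1, hE1.2, hEg1.2, hEg2.2, hEg3.2]
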